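/- One has (1/8)·( ∫_{v=0}^{1} (6−2v−v²) dv + ∫_{v=1}^{2} (6−2v−v²+2(v−1)²) dv + ∫_{u=1}^{2}∫_{v=0}^{2−u} (6+6(u−1)²−v²−12(u−1)−2v+2(u−1)v) dv du + ∫_{u=1}^{2}∫_{v=2−u}^{4−2u} (6+6(u−1)²−v²−12(u−1)−2v+2(u−1)v+2(u+v−2)²) dv du ) = 15/16, and 15/16 < 1. -/

import Mathlib

open intervalIntegral

lemma cubic_int (a b c0 c1 c2 c3 : ℝ) :
    (∫ v in a..b, (c0 + c1 * v + c2 * v ^ 2 + c3 * v ^ 3)) =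
      c0 * (b - a) + c1 * (b ^ 2 - a ^ 2) / 2 + c2 * (b ^ 3 - a ^ 3) / 3
        + c3 * (b ^ 4 - a ^ 4) / 4 := by
  have h : ∀ x : ℝ, HasDerivAt
      (fun v => c0 * v + c1 * v ^ 2 / 2 + c2 * v ^ 3 / 3 + c3 * v ^ 4 / 4)
      (c0 + c1 * x + c2 * x ^ 2 + c3 * x ^ 3) x := by
    intro x
    have := ((((hasDerivAt_id x).const_mul c0).add
        (((hasDerivAt_pow 2 x).const_mul c1).div_const 2)).add
        (((hasDerivAt_pow 3 x).const_mul c2).div_const 3)).add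
        (((hasDerivAt_pow 4 x).const_mul c3).div_const 4)
    refine this.congr_deriv ?_
    push_cast
    ring
  rw [intervalIntegral.integral_eq_sub_of_hasDerivAt (fun x _ => h x)
    ((by fun_prop : Continuous fun v : ℝ => c0 + c1 * v + c2 * v ^ 2 + c3 * v ^ 3).intervalIntegrable a b)]
  ring

/-- `S(W^Y;Z) = 15/16 < 1` for a `(-1)`-curve `Z = E₁` on a smooth sextic del Pezzo
fiber `Y`. -/
theorem S_WY_minus_one_curve :
    (1 / 8 : ℝ) *
      ((∫ v in (0:ℝ)..1, (6 - 2 * v - v ^ 2)) +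
       (∫ v in (1:ℝ)..2, (6 - 2 * v - v ^ 2 + 2 * (v - 1) ^ 2)) +
       (∫ u in (1:ℝ)..2, ∫ v in (0:ℝ)..(2 - u),
          (6 + 6 * (u - 1) ^ 2 - v ^ 2 - 12 * (u - 1) - 2 * v + 2 * (u - 1) * v)) +
       (∫ u in (1:ℝ)..2, ∫ v in (2 - u)..(4 - 2 * u),
          (6 + 6 * (u - 1) ^ 2 - v ^ 2 - 12 * (u - 1) - 2 * v + 2 * (u - 1) * v
            + 2 * (u + v - 2) ^ 2))) = 15 / 16 ∧ (15 / 16 : ℝ) < 1 := by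
  constructor
  · have h1 : (∫ v in (0:ℝ)..1, (6 - 2 * v - v ^ 2)) = 14 / 3 := by
      rw [show (fun v : ℝ => 6 - 2 * v - v ^ 2)
          = fun v : ℝ => 6 + (-2) * v + (-1) * v ^ 2 + 0 * v ^ 3 from
        funext fun v => by ring, cubic_int]
      norm_num
    have h2 : (∫ v in (1:ℝ)..2, (6 - 2 * v - v ^ 2 + 2 * (v - 1) ^ 2)) = 4 / 3 := by
      rw [show (fun v : ℝ => 6 - 2 * v - v ^ 2 + 2 * (v - 1) ^ 2)
          = fun v : ℝ => 8 + (-6) * v + 1 * v ^ 2 + 0 * v ^ 3 from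
        funext fun v => by ring, cubic_int]
      norm_num
    have hin3 : ∀ u : ℝ, (∫ v in (0:ℝ)..(2 - u),
        (6 + 6 * (u - 1) ^ 2 - v ^ 2 - 12 * (u - 1) - 2 * v + 2 * (u - 1) * v))
        = 112 / 3 + (-56) * u + 28 * u ^ 2 + (-(14 / 3)) * u ^ 3 := by
      intro u
      rw [show (fun v : ℝ =>
            6 + 6 * (u - 1) ^ 2 - v ^ 2 - 12 * (u - 1) - 2 * v + 2 * (u - 1) * v)
          = fun v : ℝ => (6 + 6 * (u - 1) ^ 2 - 12 * (u - 1)) + (2 * u - 4) * v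
              + (-1) * v ^ 2 + 0 * v ^ 3 from
        funext fun v => by ring, cubic_int]
      ring
    have h3 : (∫ u in (1:ℝ)..2, ∫ v in (0:ℝ)..(2 - u),
        (6 + 6 * (u - 1) ^ 2 - v ^ 2 - 12 * (u - 1) - 2 * v + 2 * (u - 1) * v)) = 7 / 6 := by
      simp only [hin3]
      rw [cubic_int]
      norm_num
    have hin4 : ∀ u : ℝ, (∫ v in (2 - u)..(4 - 2 * u),
        (6 + 6 * (u - 1) ^ 2 - v ^ 2 - 12 * (u - 1) - 2 * v + 2 * (u - 1) * v
          + 2 * (u + v - 2) ^ 2))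
        = 32 / 3 + (-16) * u + 8 * u ^ 2 + (-(4 / 3)) * u ^ 3 := by
      intro u
      rw [show (fun v : ℝ =>
            6 + 6 * (u - 1) ^ 2 - v ^ 2 - 12 * (u - 1) - 2 * v + 2 * (u - 1) * v
              + 2 * (u + v - 2) ^ 2)
          = fun v : ℝ => (6 + 6 * (u - 1) ^ 2 - 12 * (u - 1) + 2 * (u - 2) ^ 2)
              + (6 * u - 12) * v + 1 * v ^ 2 + 0 * v ^ 3 from
        funext fun v => by ring, cubic_int]
      ring
    have h4 : (∫ u in (1:ℝ)..2, ∫ v in (2 - u)..(4 - 2 * u),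
        (6 + 6 * (u - 1) ^ 2 - v ^ 2 - 12 * (u - 1) - 2 * v + 2 * (u - 1) * v
          + 2 * (u + v - 2) ^ 2)) = 1 / 3 := by
      simp only [hin4]
      rw [cubic_int]
      norm_num
    rw [h1, h2, h3, h4]
    norm_num
  · norm_num
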